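/- If P, Q, R satisfy Ramanujan's differential system, then 4Q·δ²Q − 5(δQ)² = 960Δ where Δ = (Q³−R²)/1728. -/

import Mathlib

/-- If `P, Q, R` satisfy Ramanujan's system, then `4Q·δ²Q − 5(δQ)² = 960Δ`
where `Δ = (Q³−R²)/1728` and `δ = q d/dq`. -/
theorem rankin_Q_identity (P Q R : ℂ → ℂ)
    (hP : ContDiff ℂ ⊤ P) (hQ : ContDiff ℂ ⊤ Q) (hR : ContDiff ℂ ⊤ R)
    (h1 : ∀ q : ℂ, q * deriv P q = (P q ^ 2 - Q q) / 12)
    (h2 : ∀ q : ℂ, q * deriv Q q = (P q * Q q - R q) / 3)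
    (h3 : ∀ q : ℂ, q * deriv R q = (P q * R q - Q q ^ 2) / 2) :
    ∀ q : ℂ,
      4 * Q q * (q * deriv (fun t => t * deriv Q t) q) - 5 * (q * deriv Q q) ^ 2 =
        960 * ((Q q ^ 3 - R q ^ 2) / 1728) := by
  intro q
  have hDP : DifferentiableAt ℂ P q := (hP.differentiable (by simp)).differentiableAt
  have hDQ : DifferentiableAt ℂ Q q := (hQ.differentiable (by simp)).differentiableAt
  have hDR : DifferentiableAt ℂ R q := (hR.differentiable (by simp)).differentiableAt
  have hfun : (fun t => t * deriv Q t) = fun t => (P t * Q t - R t) / 3 := funext h2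
  rw [hfun, deriv_div_const, deriv_fun_sub (f := fun t => P t * Q t) (hDP.mul hDQ) hDR, deriv_fun_mul hDP hDQ]
  have key : q * ((deriv P q * Q q + P q * deriv Q q - deriv R q) / 3)
      = ((q * deriv P q) * Q q + P q * (q * deriv Q q) - q * deriv R q) / 3 := by ring
  rw [key, h1 q, h2 q, h3 q]
  ring
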